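/- Intermediate MGF identity: with the notation above, φ(s) = (s+1) ∫₀^∞ D_{t^{1/s}}(μ‖μ') dt for s > 0, where D_α(μ‖μ') = ∫ max(p − αq, 0) dz is defined for all α > 0 (not just α ≥ 1). -/

import Mathlib

open MeasureTheory Real
open scoped ENNReal

lemma aux_integrableOn (P Q s : ℝ) (hP : 0 < P) (hQ : 0 < Q) (hs : 0 < s) :
    IntegrableOn (fun t : ℝ => max (P - t ^ (1 / s) * Q) 0) (Set.Ioi 0) := by
  set r : ℝ := (P / Q) ^ s with hr
  have hrpos : 0 < r := Real.rpow_pos_of_pos (div_pos hP hQ) s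
  have hcont : Continuous (fun t : ℝ => P - t ^ (1 / s) * Q) :=
    continuous_const.sub ((Real.continuous_rpow_const (by positivity)).mul continuous_const)
  have hInd : Integrable ((Set.Ioc (0:ℝ) r).indicator (fun t => P - t ^ (1 / s) * Q)) :=
    (hcont.integrableOn_Ioc).integrable_indicator measurableSet_Ioc
  refine (hInd.integrableOn).congr_fun ?_ measurableSet_Ioi
  intro t ht
  have ht' : (0:ℝ) < t := ht
  have h2 : r ^ (1/s) = P / Q := by
    rw [hr, ← Real.rpow_mul (div_pos hP hQ).le, mul_one_div_cancel hs.ne', Real.rpow_one]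
  by_cases h : t ≤ r
  · rw [Set.indicator_of_mem (Set.mem_Ioc.mpr ⟨ht', h⟩)]
    have h1 : t ^ (1/s) ≤ r ^ (1/s) := Real.rpow_le_rpow ht'.le h (by positivity)
    rw [h2] at h1
    have h3 : 0 ≤ P - t ^ (1/s) * Q := by
      have := (le_div_iff₀ hQ).mp h1
      linarith
    exact (max_eq_left h3).symm
  · push_neg at h
    rw [Set.indicator_of_notMem (fun hmem => absurd hmem.2 (not_le.mpr h))]
    have h1 : r ^ (1/s) < t ^ (1/s) := Real.rpow_lt_rpow hrpos.le h (by positivity)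
    rw [h2] at h1
    have h3 : P - t ^ (1/s) * Q < 0 := by
      have := (div_lt_iff₀ hQ).mp h1
      linarith
    exact (max_eq_right h3.le).symm

lemma aux_integral (P Q s : ℝ) (hP : 0 < P) (hQ : 0 < Q) (hs : 0 < s) :
    ∫ t in Set.Ioi (0:ℝ), max (P - t ^ (1 / s) * Q) 0 = P * (P / Q) ^ s / (s + 1) := by
  set r : ℝ := (P / Q) ^ s with hr
  have hrpos : 0 < r := Real.rpow_pos_of_pos (div_pos hP hQ) s
  have h2 : r ^ (1/s) = P / Q := by
    rw [hr, ← Real.rpow_mul (div_pos hP hQ).le, mul_one_div_cancel hs.ne', Real.rpow_one]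
  have heq : ∀ t ∈ Set.Ioi (0:ℝ), max (P - t ^ (1 / s) * Q) 0
      = (Set.Ioc (0:ℝ) r).indicator (fun t => P - t ^ (1 / s) * Q) t := by
    intro t ht
    have ht' : (0:ℝ) < t := ht
    by_cases h : t ≤ r
    · rw [Set.indicator_of_mem (Set.mem_Ioc.mpr ⟨ht', h⟩)]
      have h1 : t ^ (1/s) ≤ r ^ (1/s) := Real.rpow_le_rpow ht'.le h (by positivity)
      rw [h2] at h1
      have h3 : 0 ≤ P - t ^ (1/s) * Q := by
        have := (le_div_iff₀ hQ).mp h1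
        linarith
      exact max_eq_left h3
    · push_neg at h
      rw [Set.indicator_of_notMem (fun hmem => absurd hmem.2 (not_le.mpr h))]
      have h1 : r ^ (1/s) < t ^ (1/s) := Real.rpow_lt_rpow hrpos.le h (by positivity)
      rw [h2] at h1
      have : P - t ^ (1/s) * Q < 0 := by
        have := (div_lt_iff₀ hQ).mp h1
        linarith
      exact max_eq_right this.le
  rw [setIntegral_congr_fun measurableSet_Ioi heq, setIntegral_indicator measurableSet_Ioc]
  have hinter : Set.Ioi (0:ℝ) ∩ Set.Ioc 0 r = Set.Ioc 0 r :=
    Set.inter_eq_self_of_subset_right Set.Ioc_subset_Ioi_self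
  rw [hinter, ← intervalIntegral.integral_of_le hrpos.le]
  have hspos : (0:ℝ) < 1/s := by positivity
  have hint : IntervalIntegrable (fun t : ℝ => t ^ (1/s)) volume 0 r :=
    intervalIntegral.intervalIntegrable_rpow' (by linarith)
  rw [intervalIntegral.integral_sub intervalIntegrable_const (hint.mul_const Q),
    intervalIntegral.integral_const, intervalIntegral.integral_mul_const,
    integral_rpow (Or.inl (by linarith))]
  have h0 : (0:ℝ) ^ (1/s + 1) = 0 := Real.zero_rpow (by linarith)
  have h3 : r ^ (1/s + 1) = (P / Q) * r := by
    rw [Real.rpow_add hrpos, Real.rpow_one, h2]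
  rw [h0, h3]
  have hs1 : s + 1 ≠ 0 := by positivity
  have hs2 : 1/s + 1 ≠ 0 := by positivity
  field_simp
  ring

/-- Intermediate MGF identity: `φ(s) = (s+1) ∫₀^∞ D_{t^{1/s}}(μ‖μ') dt` for `s > 0`,
where `D_α(μ‖μ') = ∫ max(p - αq, 0)` is defined for all `α > 0`. -/
theorem mgf_eq_hsDiv_integral {Z : Type*} [MeasurableSpace Z] (ν : Measure Z)
    (p q : Z → ℝ) (hp : Measurable p) (hq : Measurable q)
    (hppos : ∀ z, 0 < p z) (hqpos : ∀ z, 0 < q z)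
    (hμ : IsProbabilityMeasure (ν.withDensity fun z => ENNReal.ofReal (p z)))
    (hμ' : IsProbabilityMeasure (ν.withDensity fun z => ENNReal.ofReal (q z)))
    (s : ℝ) (hs : 0 < s) :
    ∫ z, exp (s * Real.log (p z / q z))
        ∂(ν.withDensity fun z => ENNReal.ofReal (p z))
      = (s + 1) * ∫ t in Set.Ioi (0 : ℝ),
          ∫ z, max (p z - t ^ (1 / s) * q z) 0 ∂ν := by
  have hfm : Measurable (fun z => ENNReal.ofReal (p z)) := ENNReal.measurable_ofReal.comp hp
  -- ν is s-finite
  haveI hsf : SFinite ν := by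
    have h := withDensity_inv_same (μ := ν) hfm
      (Filter.Eventually.of_forall (fun z => by
        simp only [ne_eq, ENNReal.ofReal_eq_zero, not_le]; exact hppos z))
      (Filter.Eventually.of_forall (fun z => ENNReal.ofReal_ne_top))
    rw [← h]; infer_instance
  -- total mass of p density is 1
  have hmass : ∫⁻ z, ENNReal.ofReal (p z) ∂ν = 1 := by
    have := measure_univ (μ := ν.withDensity fun z => ENNReal.ofReal (p z))
    rwa [withDensity_apply _ MeasurableSet.univ, setLIntegral_univ] at this
  set A : ℝ≥0∞ := ∫⁻ z, ENNReal.ofReal ((p z / q z) ^ s * p z) ∂ν with hA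
  -- LHS
  have hexp_meas : Measurable (fun z => exp (s * Real.log (p z / q z))) :=
    (((hp.div hq).log).const_mul s).exp
  have hLHS : ∫ z, exp (s * Real.log (p z / q z))
      ∂(ν.withDensity fun z => ENNReal.ofReal (p z)) = A.toReal := by
    rw [integral_eq_lintegral_of_nonneg_ae
      (Filter.Eventually.of_forall (fun z => (exp_pos _).le)) hexp_meas.aestronglyMeasurable]
    congr 1
    rw [lintegral_withDensity_eq_lintegral_mul ν hfm
      (g := fun z => ENNReal.ofReal (rexp (s * Real.log (p z / q z))))
      hexp_meas.ennreal_ofReal, hA]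
    apply lintegral_congr
    intro z
    simp only [Pi.mul_apply]
    rw [← ENNReal.ofReal_mul (hppos z).le]
    congr 1
    rw [Real.rpow_def_of_pos (div_pos (hppos z) (hqpos z)), mul_comm (Real.log _)]
    ring
  -- the inner lintegral in t
  set G : ℝ → ℝ≥0∞ := fun t => ∫⁻ z, ENNReal.ofReal (max (p z - t ^ (1/s) * q z) 0) ∂ν with hG
  have hjoint : Measurable (fun x : ℝ × Z =>
      ENNReal.ofReal (max (p x.2 - x.1 ^ (1/s) * q x.2) 0)) := by
    apply ENNReal.measurable_ofReal.comp
    exact ((hp.comp measurable_snd).sub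
      (((Real.continuous_rpow_const (by positivity)).measurable.comp measurable_fst).mul
        (hq.comp measurable_snd))).max measurable_const
  have hGmeas : Measurable G := hjoint.lintegral_prod_right'
  have hGle : ∀ t ∈ Set.Ioi (0:ℝ), G t ≤ 1 := by
    intro t ht
    rw [← hmass]
    refine lintegral_mono (fun z => ENNReal.ofReal_le_ofReal ?_)
    have htp : 0 < t ^ (1/s) := Real.rpow_pos_of_pos ht (1/s)
    have : 0 < t ^ (1/s) * q z := mul_pos htp (hqpos z)
    simp only [max_le_iff]
    exact ⟨by linarith, (hppos z).le⟩
  -- F t = (G t).toReal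
  have hF_eq : ∀ t : ℝ, ∫ z, max (p z - t ^ (1/s) * q z) 0 ∂ν = (G t).toReal := by
    intro t
    exact integral_eq_lintegral_of_nonneg_ae (μ := ν)
      (f := fun z => max (p z - t ^ (1/s) * q z) 0)
      (Filter.Eventually.of_forall (fun z => le_max_right _ _))
      ((hp.sub ((measurable_const.mul hq))).max measurable_const).aestronglyMeasurable
  -- pointwise t-integral for each z
  have hptwise : ∀ z, ∫⁻ t in Set.Ioi (0:ℝ), ENNReal.ofReal (max (p z - t ^ (1/s) * q z) 0)
      = ENNReal.ofReal (1/(s+1)) * ENNReal.ofReal ((p z / q z) ^ s * p z) := by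
    intro z
    rw [← ofReal_integral_eq_lintegral_ofReal
      (aux_integrableOn _ _ _ (hppos z) (hqpos z) hs)
      (Filter.Eventually.of_forall (fun t => le_max_right _ _)),
      aux_integral _ _ _ (hppos z) (hqpos z) hs,
      ← ENNReal.ofReal_mul (by positivity)]
    congr 1
    field_simp
  have hrp_meas : Measurable (fun z => ENNReal.ofReal ((p z / q z) ^ s * p z)) :=
    ENNReal.measurable_ofReal.comp
      ((((Real.continuous_rpow_const hs.le).measurable.comp (hp.div hq))).mul hp)
  -- Tonelli
  have hswap : ∫⁻ t in Set.Ioi (0:ℝ), G t = ENNReal.ofReal (1/(s+1)) * A := by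
    calc ∫⁻ t in Set.Ioi (0:ℝ), G t
        = ∫⁻ z, (∫⁻ t in Set.Ioi (0:ℝ),
            ENNReal.ofReal (max (p z - t ^ (1/s) * q z) 0)) ∂ν :=
          lintegral_lintegral_swap hjoint.aemeasurable
      _ = ∫⁻ z, ENNReal.ofReal (1/(s+1)) * ENNReal.ofReal ((p z / q z) ^ s * p z) ∂ν :=
          lintegral_congr hptwise
      _ = ENNReal.ofReal (1/(s+1)) * A := lintegral_const_mul _ hrp_meas
  -- outer integral
  have houter : ∫ t in Set.Ioi (0:ℝ), (∫ z, max (p z - t ^ (1/s) * q z) 0 ∂ν)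
      = (ENNReal.ofReal (1/(s+1)) * A).toReal := by
    have h1 := integral_eq_lintegral_of_nonneg_ae
      (μ := volume.restrict (Set.Ioi (0:ℝ)))
      (f := fun t => ∫ z, max (p z - t ^ (1/s) * q z) 0 ∂ν)
      (Filter.Eventually.of_forall (fun t => integral_nonneg (fun z => le_max_right _ _)))
      (((ENNReal.measurable_toReal.comp hGmeas).aestronglyMeasurable).congr
        (Filter.Eventually.of_forall (fun t => (hF_eq t).symm)))
    rw [h1]
    congr 1
    rw [← hswap]
    refine setLIntegral_congr_fun measurableSet_Ioi
      (fun t ht => ?_)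
    rw [hF_eq t, ENNReal.ofReal_toReal ((hGle t ht).trans_lt (by simp)).ne]
  rw [hLHS, houter, ENNReal.toReal_mul, ENNReal.toReal_ofReal (by positivity),
    ← mul_assoc, mul_one_div_cancel (by positivity : s + 1 ≠ 0), one_mul]
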